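/- For all positive integers n and m, ∑_{k=1}^n (-1)^{k+1} C(n,k)/k^m = ∑_{n ≥ k_1 ≥ k_2 ≥ ⋯ ≥ k_m ≥ 1} 1/(k_1 k_2 ⋯ k_m). -/

import Mathlib

/-- The nested sum `∑_{n ≥ k₁ ≥ ⋯ ≥ k_m ≥ 1} ∏_j 1/k_j`. -/
noncomputable def nestedHarmonic : ℕ → ℕ → ℝ
  | _, 0 => 1
  | n, m + 1 => ∑ k ∈ Finset.Icc 1 n, (1 / (k : ℝ)) * nestedHarmonic k m

lemma altsum (n : ℕ) (hn : 1 ≤ n) :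
    ∑ k ∈ Finset.Icc 1 n, (-1 : ℝ) ^ (k + 1) * (n.choose k : ℝ) = 1 := by
  have h0 : ∑ k ∈ Finset.range (n+1), (-1 : ℝ) ^ k * (n.choose k : ℝ) = 0 := by
    have := add_pow (-1 : ℝ) 1 n
    simp at this
    rw [← this]
    rw [zero_pow (by omega)]
  have hr : Finset.range (n+1) = insert 0 (Finset.Icc 1 n) := by
    ext x; simp [Finset.mem_Icc]; omega
  rw [hr, Finset.sum_insert (by simp)] at h0
  simp at h0
  have : ∑ k ∈ Finset.Icc 1 n, (-1 : ℝ) ^ (k+1) * (n.choose k : ℝ)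
      = - ∑ k ∈ Finset.Icc 1 n, (-1 : ℝ) ^ k * (n.choose k : ℝ) := by
    rw [← Finset.sum_neg_distrib]
    refine Finset.sum_congr rfl fun k _ => ?_
    ring
  rw [this]
  linarith

lemma sumB (k : ℕ) (hk : 1 ≤ k) : ∀ n, ∑ j ∈ Finset.Icc k n, (j.choose k : ℝ) / j = (n.choose k : ℝ) / k
  | 0 => by
      rw [Finset.Icc_eq_empty (by omega), Finset.sum_empty, Nat.choose_eq_zero_of_lt hk]
      simp
  | n + 1 => by
      by_cases h : k ≤ n + 1
      · obtain ⟨j, rfl⟩ : ∃ j, k = j + 1 := ⟨k - 1, by omega⟩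
        rw [Finset.sum_Icc_succ_top h, sumB (j+1) hk n]
        have keyR : ((n : ℝ) + 1) * (n.choose j : ℝ) = ((n + 1).choose (j+1) : ℝ) * (j + 1) := by
          exact_mod_cast congrArg (Nat.cast : ℕ → ℝ) (Nat.add_one_mul_choose_eq n j)
        have pascalR : ((n + 1).choose (j+1) : ℝ) = (n.choose j : ℝ) + (n.choose (j+1) : ℝ) := by
          exact_mod_cast congrArg (Nat.cast : ℕ → ℝ) (Nat.choose_succ_succ n j)
        have hk0 : ((j : ℝ) + 1) ≠ 0 := by positivity
        have hn0 : ((n : ℝ) + 1) ≠ 0 := by positivity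
        push_cast
        have h1 : (((n+1).choose (j+1) : ℕ) : ℝ) / ((n : ℝ) + 1) = (n.choose j : ℝ) / ((j : ℝ) + 1) := by
          rw [div_eq_div_iff hn0 hk0]
          linarith [keyR]
        rw [h1, ← add_div, pascalR]
        ring
      · rw [Finset.Icc_eq_empty (by omega), Finset.sum_empty, Nat.choose_eq_zero_of_lt (by omega)]
        simp

lemma main_aux : ∀ (m n : ℕ), 1 ≤ n →
    ∑ k ∈ Finset.Icc 1 n, (-1 : ℝ) ^ (k + 1) * (n.choose k : ℝ) / (k : ℝ) ^ m = nestedHarmonic n m := by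
  intro m
  induction m with
  | zero =>
      intro n hn
      simp only [pow_zero, div_one, nestedHarmonic]
      exact altsum n hn
  | succ m ih =>
      intro n hn
      rw [nestedHarmonic]
      have step1 : ∑ j ∈ Finset.Icc 1 n, (1 / (j : ℝ)) * nestedHarmonic j m
          = ∑ j ∈ Finset.Icc 1 n, ∑ k ∈ Finset.Icc 1 j,
              (-1 : ℝ) ^ (k + 1) / (k : ℝ) ^ m * ((j.choose k : ℝ) / j) := by
        refine Finset.sum_congr rfl fun j hj => ?_
        rw [← ih j (Finset.mem_Icc.mp hj).1, Finset.mul_sum]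
        refine Finset.sum_congr rfl fun k _ => ?_
        ring
      rw [step1]
      rw [Finset.sum_comm' (s := Finset.Icc 1 n) (t := fun j => Finset.Icc 1 j)
        (t' := Finset.Icc 1 n) (s' := fun k => Finset.Icc k n)
        (by intro x y; simp only [Finset.mem_Icc]; omega)]
      refine (Finset.sum_congr rfl fun k hk => ?_).symm
      have hk1 : 1 ≤ k := (Finset.mem_Icc.mp hk).1
      rw [← Finset.mul_sum, sumB k hk1 n, pow_succ]
      ring

theorem dilcher_limit (n m : ℕ) (hn : 0 < n) (hm : 0 < m) :
    ∑ k ∈ Finset.Icc 1 n, (-1 : ℝ) ^ (k + 1) * (n.choose k : ℝ) / (k : ℝ) ^ m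
    = nestedHarmonic n m := main_aux m n hn
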